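/- Let A ∈ ℝ^{n×n} and C ∈ ℝ^{q×n}, and let Q ∈ ℝ^{n×n} be symmetric positive definite such that QA + AᵀQ − 2CᵀC is negative definite. Then the matrix A − Q⁻¹CᵀC is Hurwitz, i.e., every eigenvalue of A − Q⁻¹CᵀC over ℂ has negative real part. -/

import Mathlib

open Matrix
open scoped ComplexOrder

open Polynomial in
private lemma eig_exists' {n : ℕ} (N : Matrix (Fin n) (Fin n) ℂ) (μ : ℂ)
    (h : N.charpoly.IsRoot μ) : ∃ v : Fin n → ℂ, v ≠ 0 ∧ N *ᵥ v = μ • v := by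
  have hdet : (μ • (1 : Matrix (Fin n) (Fin n) ℂ) - N).det = 0 := by
    have he : N.charpoly.eval μ = (μ • (1 : Matrix (Fin n) (Fin n) ℂ) - N).det := by
      rw [Matrix.charpoly, ← Polynomial.coe_evalRingHom, RingHom.map_det]
      congr 1
      ext i j
      by_cases hij : i = j <;>
        simp [charmatrix_apply, Matrix.one_apply, hij, diagonal_apply]
    rw [← he]; exact h
  obtain ⟨v, hv, hv0⟩ := (Matrix.exists_mulVec_eq_zero_iff).2 hdet
  refine ⟨v, hv, ?_⟩
  have := hv0
  rw [sub_mulVec, smul_mulVec, one_mulVec, sub_eq_zero] at this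
  exact this.symm

private lemma herm_quad_im' {n : ℕ} {M : Matrix (Fin n) (Fin n) ℂ} (hM : M.IsHermitian)
    (x : Fin n → ℂ) : (star x ⬝ᵥ M *ᵥ x).im = 0 := by
  have h : star (star x ⬝ᵥ M *ᵥ x) = star x ⬝ᵥ M *ᵥ x := by
    calc star (star x ⬝ᵥ M *ᵥ x) = star (M *ᵥ x) ⬝ᵥ x := by
          rw [star_dotProduct]; simp
      _ = (star x ᵥ* Mᴴ) ⬝ᵥ x := by rw [star_mulVec]
      _ = star x ⬝ᵥ Mᴴ *ᵥ x := by rw [dotProduct_mulVec]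
      _ = star x ⬝ᵥ M *ᵥ x := by rw [hM.eq]
  have := congrArg Complex.im h
  simp only [Complex.star_def, Complex.conj_im] at this
  linarith

private lemma re_quad' {n : ℕ} (S : Matrix (Fin n) (Fin n) ℝ) (x : Fin n → ℂ) :
    (star x ⬝ᵥ (S.map Complex.ofReal) *ᵥ x).re
      = (fun i => (x i).re) ⬝ᵥ S *ᵥ (fun i => (x i).re)
        + (fun i => (x i).im) ⬝ᵥ S *ᵥ (fun i => (x i).im) := by
  simp only [dotProduct, mulVec, map_apply, Pi.star_apply, Complex.star_def,
    Finset.mul_sum, Complex.re_sum, Complex.mul_re, Complex.mul_im,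
    Complex.conj_re, Complex.conj_im, Complex.ofReal_re, Complex.ofReal_im]
  rw [← Finset.sum_add_distrib]
  refine Finset.sum_congr rfl fun i _ => ?_
  rw [← Finset.sum_add_distrib]
  refine Finset.sum_congr rfl fun j _ => ?_
  ring

open scoped ComplexOrder in
private lemma posdef_map' {n : ℕ} {S : Matrix (Fin n) (Fin n) ℝ} (hS : S.PosDef) :
    (S.map Complex.ofReal).PosDef := by
  have hsymm : Sᵀ = S := hS.1
  have hherm : (S.map Complex.ofReal).IsHermitian := by
    ext i j
    simp only [conjTranspose_apply, map_apply, Complex.star_def, Complex.conj_ofReal]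
    exact_mod_cast congrFun (congrFun hsymm i) j
  refine posDef_iff_dotProduct_mulVec.mpr ⟨hherm, fun x hx => ?_⟩
  rw [Complex.lt_def]
  refine ⟨?_, (herm_quad_im' hherm x).symm⟩
  simp only [Complex.zero_re]
  rw [re_quad']
  set a : Fin n → ℝ := fun i => (x i).re with ha
  set b : Fin n → ℝ := fun i => (x i).im with hb
  have hab : a ≠ 0 ∨ b ≠ 0 := by
    by_contra hc
    push_neg at hc
    apply hx
    funext i
    have h1 := congrFun hc.1 i
    have h2 := congrFun hc.2 i
    simp only [ha, hb, Pi.zero_apply] at h1 h2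
    exact Complex.ext h1 h2
  have hsa : ∀ v : Fin n → ℝ, 0 ≤ v ⬝ᵥ S *ᵥ v := fun v => by
    simpa using hS.posSemidef.dotProduct_mulVec_nonneg v
  rcases hab with h | h
  · have := hS.dotProduct_mulVec_pos h
    simp only [star_trivial] at this ⊢
    have hb' := hsa b
    linarith
  · have := hS.dotProduct_mulVec_pos h
    simp only [star_trivial] at this ⊢
    have ha' := hsa a
    linarith

/-- A square real matrix is Hurwitz if every complex eigenvalue (root of the
characteristic polynomial of its complexification) has negative real part. -/
def IsHurwitz {n : ℕ} (M : Matrix (Fin n) (Fin n) ℝ) : Prop :=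
  ∀ μ : ℂ, (M.map Complex.ofReal).charpoly.IsRoot μ → μ.re < 0

/-- If `Q` is symmetric positive definite and
`QA + AᵀQ − 2CᵀC` is negative definite, then `A − Q⁻¹CᵀC` is Hurwitz. -/
theorem observer_gain_Hurwitz
    (n q : ℕ)
    (A : Matrix (Fin n) (Fin n) ℝ) (C : Matrix (Fin q) (Fin n) ℝ)
    (Q : Matrix (Fin n) (Fin n) ℝ)
    (hQ : Q.PosDef)
    (hLMI : (-(Q * A + Aᵀ * Q - (2 : ℝ) • (Cᵀ * C))).PosDef) :
    IsHurwitz (A - Q⁻¹ * (Cᵀ * C)) := by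
  set M : Matrix (Fin n) (Fin n) ℝ := A - Q⁻¹ * (Cᵀ * C) with hM
  set S : Matrix (Fin n) (Fin n) ℝ := -(Q * A + Aᵀ * Q - (2 : ℝ) • (Cᵀ * C)) with hS
  -- Q is invertible
  have hdet : IsUnit Q.det := isUnit_iff_ne_zero.2 (ne_of_gt hQ.det_pos)
  have hQQi : Q * Q⁻¹ = 1 := Matrix.mul_nonsing_inv Q hdet
  have hQiQ : Q⁻¹ * Q = 1 := Matrix.nonsing_inv_mul Q hdet
  have hQsymm : Qᵀ = Q := hQ.1
  -- Lyapunov identity over ℝ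
  have hlyap : Mᵀ * Q + Q * M = -S := by
    have hMT : Mᵀ = Aᵀ - Cᵀ * C * Q⁻¹ := by
      rw [hM, transpose_sub, transpose_mul, transpose_mul, transpose_transpose,
        Matrix.transpose_nonsing_inv, hQsymm, Matrix.mul_assoc]
    rw [hMT, hM, hS]
    rw [Matrix.sub_mul, Matrix.mul_sub]
    rw [Matrix.mul_assoc (Cᵀ * C) Q⁻¹ Q, hQiQ, Matrix.mul_one]
    rw [← Matrix.mul_assoc Q Q⁻¹ (Cᵀ * C), hQQi, Matrix.one_mul]
    rw [two_smul]
    abel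
  -- complexification
  intro μ hμ
  obtain ⟨v, hv0, hvv⟩ := eig_exists' _ μ hμ
  set N := M.map Complex.ofReal with hN
  set Qc := Q.map Complex.ofReal with hQc
  set Sc := S.map Complex.ofReal with hSc
  have hmul : ∀ X Y : Matrix (Fin n) (Fin n) ℝ,
      (X * Y).map Complex.ofReal = X.map Complex.ofReal * Y.map Complex.ofReal := by
    intro X Y
    ext i j
    simp [Matrix.mul_apply, Matrix.map_apply]
  have hNH : Nᴴ = Mᵀ.map Complex.ofReal := by
    ext i j
    simp [hN, conjTranspose_apply, Matrix.map_apply, Complex.conj_ofReal]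
  have hlyapC : Nᴴ * Qc + Qc * N = -Sc := by
    rw [hNH, hQc, hN, hSc, ← hmul, ← hmul]
    have : (Mᵀ * Q).map Complex.ofReal + (Q * M).map Complex.ofReal
        = (Mᵀ * Q + Q * M).map Complex.ofReal := by
      ext i j; simp [Matrix.map_apply]
    rw [this, hlyap]
    ext i j; simp [Matrix.map_apply]
  -- quadratic forms
  set qv : ℂ := star v ⬝ᵥ Qc *ᵥ v with hqv
  set sv : ℂ := star v ⬝ᵥ Sc *ᵥ v with hsv
  have hq : 0 < qv := (posdef_map' hQ).dotProduct_mulVec_pos hv0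
  have hs : 0 < sv := (posdef_map' hLMI).dotProduct_mulVec_pos hv0
  have e1 : star v ⬝ᵥ ((Nᴴ * Qc) *ᵥ v) = (starRingEnd ℂ μ) * qv := by
    rw [← Matrix.mulVec_mulVec, dotProduct_mulVec, ← star_mulVec, hvv,
      star_smul, smul_dotProduct, smul_eq_mul, Complex.star_def]
  have e2 : star v ⬝ᵥ ((Qc * N) *ᵥ v) = μ * qv := by
    rw [← Matrix.mulVec_mulVec, hvv, Matrix.mulVec_smul, dotProduct_smul, smul_eq_mul]
  have key : (starRingEnd ℂ μ + μ) * qv = -sv := by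
    have h3 : star v ⬝ᵥ ((Nᴴ * Qc + Qc * N) *ᵥ v) = -sv := by
      rw [hlyapC, neg_mulVec, dotProduct_neg]
    rw [Matrix.add_mulVec, dotProduct_add, e1, e2] at h3
    rw [add_mul]; exact h3
  -- take real parts
  have hqre : 0 < qv.re := by
    rw [Complex.lt_def] at hq; exact hq.1
  have hsre : 0 < sv.re := by
    rw [Complex.lt_def] at hs; exact hs.1
  have hconj : starRingEnd ℂ μ + μ = ((2 * μ.re : ℝ) : ℂ) := by
    rw [add_comm, Complex.add_conj]
  have hre := congrArg Complex.re key
  rw [hconj] at hre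
  rw [Complex.neg_re, Complex.mul_re, Complex.ofReal_re, Complex.ofReal_im] at hre
  simp only [zero_mul, sub_zero] at hre
  nlinarith
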